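/- Let φ : (0,∞) → ℝ be twice continuously differentiable, let Ω = {(x,y,z) ∈ ℝ³ : z > 0, y > z·exp(x/z)}, and define F : Ω → ℝ by F(x,y,z) = −log y − 2·log z + φ(t), where t = log(y/z) − x/z. Then the Hessian F''(x,y,z) is positive definite if and only if φ̇(t) < 2/3 and φ̈(t) > φ̇(t)²(1 − φ̇(t))/(2 − 3φ̇(t)). -/

import Mathlib

open Set Real

open Matrix


/-! ### Auxiliary definitions and lemmas -/

noncomputable def L3 (c₀ c₁ c₂ : ℝ) : (Fin 3 → ℝ) →L[ℝ] ℝ :=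
  c₀ • ContinuousLinearMap.proj 0 + c₁ • ContinuousLinearMap.proj 1
    + c₂ • ContinuousLinearMap.proj 2

lemma L3_apply (c₀ c₁ c₂ : ℝ) (x : Fin 3 → ℝ) :
    L3 c₀ c₁ c₂ x = c₀ * x 0 + c₁ * x 1 + c₂ * x 2 := by
  simp [L3]

lemma L3_single0 (c₀ c₁ c₂ : ℝ) : L3 c₀ c₁ c₂ (Pi.single 0 1) = c₀ := by
  simp [L3_apply, Pi.single_apply]
lemma L3_single1 (c₀ c₁ c₂ : ℝ) : L3 c₀ c₁ c₂ (Pi.single 1 1) = c₁ := by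
  simp [L3_apply, Pi.single_apply]
lemma L3_single2 (c₀ c₁ c₂ : ℝ) : L3 c₀ c₁ c₂ (Pi.single 2 1) = c₂ := by
  simp [L3_apply, Pi.single_apply]

noncomputable def tt (w : Fin 3 → ℝ) : ℝ :=
  Real.log (w 1) - Real.log (w 2) - w 0 * (w 2)⁻¹

noncomputable def G0 (φ : ℝ → ℝ) (w : Fin 3 → ℝ) : ℝ := -(deriv φ (tt w) * (w 2)⁻¹)
noncomputable def G1 (φ : ℝ → ℝ) (w : Fin 3 → ℝ) : ℝ := (-1 + deriv φ (tt w)) * (w 1)⁻¹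
noncomputable def G2 (φ : ℝ → ℝ) (w : Fin 3 → ℝ) : ℝ :=
  -2 * (w 2)⁻¹ + deriv φ (tt w) * ((w 0 - w 2) * ((w 2)⁻¹ * (w 2)⁻¹))

lemma coord_hasFDerivAt (i : Fin 3) (w : Fin 3 → ℝ) :
    HasFDerivAt (fun w : Fin 3 → ℝ => w i)
      (ContinuousLinearMap.proj (R := ℝ) (φ := fun _ : Fin 3 => ℝ) i) w :=
  hasFDerivAt_apply i w

lemma inv2_hasFDerivAt (w : Fin 3 → ℝ) (h2 : 0 < w 2) :
    HasFDerivAt (fun w : Fin 3 → ℝ => (w 2)⁻¹)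
      ((-((w 2) ^ 2)⁻¹) • ContinuousLinearMap.proj (R := ℝ) (φ := fun _ : Fin 3 => ℝ) 2) w :=
  (hasDerivAt_inv h2.ne').comp_hasFDerivAt w (coord_hasFDerivAt 2 w)

lemma inv1_hasFDerivAt (w : Fin 3 → ℝ) (h1 : 0 < w 1) :
    HasFDerivAt (fun w : Fin 3 → ℝ => (w 1)⁻¹)
      ((-((w 1) ^ 2)⁻¹) • ContinuousLinearMap.proj (R := ℝ) (φ := fun _ : Fin 3 => ℝ) 1) w :=
  (hasDerivAt_inv h1.ne').comp_hasFDerivAt w (coord_hasFDerivAt 1 w)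

lemma tt_hasFDerivAt (w : Fin 3 → ℝ) (h1 : 0 < w 1) (h2 : 0 < w 2) :
    HasFDerivAt tt (L3 (-(w 2)⁻¹) ((w 1)⁻¹) (w 0 * ((w 2)^2)⁻¹ - (w 2)⁻¹)) w := by
  have h := ((((coord_hasFDerivAt 1 w).log h1.ne').sub
      ((coord_hasFDerivAt 2 w).log h2.ne')).sub
      ((coord_hasFDerivAt 0 w).mul (inv2_hasFDerivAt w h2)))
  refine h.congr_fderiv ?_
  ext x
  simp [L3]
  field_simp
  ring

lemma FF_hasFDerivAt (φ : ℝ → ℝ) (w : Fin 3 → ℝ) (h1 : 0 < w 1) (h2 : 0 < w 2)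
    (hd : HasDerivAt φ (deriv φ (tt w)) (tt w)) :
    HasFDerivAt (fun u => -Real.log (u 1) - 2 * Real.log (u 2) + φ (tt u))
      (L3 (G0 φ w) (G1 φ w) (G2 φ w)) w := by
  have h := ((((coord_hasFDerivAt 1 w).log h1.ne').neg.sub
      (((coord_hasFDerivAt 2 w).log h2.ne').const_mul 2)).add
      (hd.comp_hasFDerivAt w (tt_hasFDerivAt w h1 h2)))
  refine h.congr_fderiv ?_
  ext x
  simp [L3, G0, G1, G2]
  field_simp
  ring

lemma A_hasFDerivAt (φ : ℝ → ℝ) (w : Fin 3 → ℝ) (h1 : 0 < w 1) (h2 : 0 < w 2)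
    (hd2 : HasDerivAt (deriv φ) (deriv (deriv φ) (tt w)) (tt w)) :
    HasFDerivAt (fun u => deriv φ (tt u))
      (deriv (deriv φ) (tt w) • L3 (-(w 2)⁻¹) ((w 1)⁻¹) (w 0 * ((w 2)^2)⁻¹ - (w 2)⁻¹)) w :=
  hd2.comp_hasFDerivAt w (tt_hasFDerivAt w h1 h2)

lemma G0_hasFDerivAt (φ : ℝ → ℝ) (w : Fin 3 → ℝ) (h1 : 0 < w 1) (h2 : 0 < w 2)
    (hd2 : HasDerivAt (deriv φ) (deriv (deriv φ) (tt w)) (tt w)) :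
    HasFDerivAt (G0 φ)
      (L3 (deriv (deriv φ) (tt w) / (w 2)^2)
          (-(deriv (deriv φ) (tt w)) / (w 2 * w 1))
          ((deriv φ (tt w) - deriv (deriv φ) (tt w) * ((w 0 - w 2)/(w 2))) / (w 2)^2)) w := by
  have h := ((A_hasFDerivAt φ w h1 h2 hd2).mul (inv2_hasFDerivAt w h2)).neg
  refine h.congr_fderiv ?_
  ext x
  simp [L3, G0]
  field_simp
  ring

lemma G1_hasFDerivAt (φ : ℝ → ℝ) (w : Fin 3 → ℝ) (h1 : 0 < w 1) (h2 : 0 < w 2)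
    (hd2 : HasDerivAt (deriv φ) (deriv (deriv φ) (tt w)) (tt w)) :
    HasFDerivAt (G1 φ)
      (L3 (-(deriv (deriv φ) (tt w)) / (w 2 * w 1))
          ((1 - deriv φ (tt w) + deriv (deriv φ) (tt w)) / (w 1)^2)
          (deriv (deriv φ) (tt w) * ((w 0 - w 2)/(w 2)) / (w 1 * w 2))) w := by
  have h := ((hasFDerivAt_const (-1 : ℝ) w).add (A_hasFDerivAt φ w h1 h2 hd2)).mul
      (inv1_hasFDerivAt w h1)
  refine h.congr_fderiv ?_
  ext x
  simp [L3, G1]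
  field_simp
  ring

lemma G2_hasFDerivAt (φ : ℝ → ℝ) (w : Fin 3 → ℝ) (h1 : 0 < w 1) (h2 : 0 < w 2)
    (hd2 : HasDerivAt (deriv φ) (deriv (deriv φ) (tt w)) (tt w)) :
    HasFDerivAt (G2 φ)
      (L3 ((deriv φ (tt w) - deriv (deriv φ) (tt w) * ((w 0 - w 2)/(w 2))) / (w 2)^2)
          (deriv (deriv φ) (tt w) * ((w 0 - w 2)/(w 2)) / (w 1 * w 2))
          ((2 - deriv φ (tt w) * (1 + 2*((w 0 - w 2)/(w 2)))
            + deriv (deriv φ) (tt w) * ((w 0 - w 2)/(w 2))^2) / (w 2)^2)) w := by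
  have h := ((inv2_hasFDerivAt w h2).const_mul (-2 : ℝ)).add
      ((A_hasFDerivAt φ w h1 h2 hd2).mul
        (((coord_hasFDerivAt 0 w).sub (coord_hasFDerivAt 2 w)).mul
          ((inv2_hasFDerivAt w h2).mul (inv2_hasFDerivAt w h2))))
  refine h.congr_fderiv ?_
  ext x
  simp [L3, G2]
  field_simp
  ring

noncomputable def Mmat (a b s y z : ℝ) : Matrix (Fin 3) (Fin 3) ℝ :=
  !![b/z^2, -b/(z*y), (a-b*s)/z^2;
     -b/(z*y), (1-a+b)/y^2, b*s/(y*z);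
     (a-b*s)/z^2, b*s/(y*z), (2 - a*(1+2*s) + b*s^2)/z^2]

lemma Mmat_quad (a b s y z : ℝ) (hy : y ≠ 0) (hz : z ≠ 0) (x : Fin 3 → ℝ) :
    y^2 * z^2 * (x ⬝ᵥ (Mmat a b s y z) *ᵥ x) =
      b * (y * x 0)^2 - 2*b*(y * x 0)*(z * x 1) + (1-a+b) * (z * x 1)^2
      + 2*(a - b*s)*(y * x 0)*(y * x 2) + 2*b*s*(z * x 1)*(y * x 2)
      + (2 - a*(1+2*s) + b*s^2) * (y * x 2)^2 := by
  simp [Mmat, Matrix.mulVec, dotProduct, Fin.sum_univ_three]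
  field_simp
  ring

lemma Mmat_herm (a b s y z : ℝ) : (Mmat a b s y z).IsHermitian := by
  unfold Matrix.IsHermitian
  ext i j
  fin_cases i <;> fin_cases j <;> simp [Mmat]

set_option maxHeartbeats 1000000 in
lemma posdef_iff (a b s y z : ℝ) (hy : 0 < y) (hz : 0 < z) :
    (Mmat a b s y z).PosDef ↔ (a < 2/3 ∧ b > a^2 * (1-a) / (2 - 3*a)) := by
  have hy2 : (0:ℝ) < y^2 := by positivity
  have hz2 : (0:ℝ) < z^2 := by positivity
  constructor
  · intro hPD
    obtain ⟨hH, hq⟩ := Matrix.posDef_iff_dotProduct_mulVec.mp hPD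
    have k : ∀ u v w : ℝ, ¬(u = 0 ∧ v = 0 ∧ w = 0) →
        0 < b * (y*u)^2 - 2*b*(y*u)*(z*v) + (1-a+b) * (z*v)^2
          + 2*(a - b*s)*(y*u)*(y*w) + 2*b*s*(z*v)*(y*w)
          + (2 - a*(1+2*s) + b*s^2) * (y*w)^2 := by
      intro u v w huvw
      have hne : (![u,v,w] : Fin 3 → ℝ) ≠ 0 := by
        intro h0
        exact huvw ⟨congrFun h0 0, congrFun h0 1, congrFun h0 2⟩
      have h1 := hq (x := ![u,v,w]) hne
      have h1' : 0 < (![u,v,w] : Fin 3 → ℝ) ⬝ᵥ (Mmat a b s y z) *ᵥ ![u,v,w] := by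
        simpa using h1
      have h2 : 0 < y^2*z^2*((![u,v,w] : Fin 3 → ℝ) ⬝ᵥ (Mmat a b s y z) *ᵥ ![u,v,w]) :=
        mul_pos (mul_pos hy2 hz2) h1'
      rw [Mmat_quad a b s y z hy.ne' hz.ne'] at h2
      simpa using h2
    have hb : 0 < b := by
      have h100 := k 1 0 0 (by norm_num)
      nlinarith [h100, hy2]
    have ha1 : a < 1 := by
      have h2v := k z y 0 (by simp [hz.ne'])
      nlinarith [h2v, mul_pos hy2 hz2]
    have hD : 0 < b*(2-3*a) - a^2*(1-a) := by
      have hw : z*b*(1-a) ≠ 0 := mul_ne_zero (mul_ne_zero hz.ne' hb.ne') (by linarith : (0:ℝ) < 1-a).ne'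
      have h3v := k (z*(-(a*b) - a*(1-a) + b*(1-a)*s)) (-(a*b*y)) (z*b*(1-a))
        (by intro ⟨_, _, h3⟩; exact hw h3)
      have heq : b * (y*(z*(-(a*b) - a*(1-a) + b*(1-a)*s)))^2
          - 2*b*(y*(z*(-(a*b) - a*(1-a) + b*(1-a)*s)))*(z*(-(a*b*y)))
          + (1-a+b) * (z*(-(a*b*y)))^2
          + 2*(a - b*s)*(y*(z*(-(a*b) - a*(1-a) + b*(1-a)*s)))*(y*(z*b*(1-a)))
          + 2*b*s*(z*(-(a*b*y)))*(y*(z*b*(1-a)))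
          + (2 - a*(1+2*s) + b*s^2) * (y*(z*b*(1-a)))^2
          = y^2*z^2*(b*(1-a))*(b*(2-3*a) - a^2*(1-a)) := by ring
      rw [heq] at h3v
      nlinarith [h3v, mul_pos (mul_pos hy2 hz2) (mul_pos hb (by linarith : (0:ℝ) < 1 - a))]
    have ha23 : a < 2/3 := by
      nlinarith [hD, hb, mul_nonneg (sq_nonneg a) (by linarith : (0:ℝ) ≤ 1 - a)]
    refine ⟨ha23, ?_⟩
    rw [gt_iff_lt, div_lt_iff₀ (by linarith : (0:ℝ) < 2 - 3*a)]
    linarith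
  · rintro ⟨ha23, hbgt⟩
    have h2a : (0:ℝ) < 2 - 3*a := by linarith
    have ha1 : a < 1 := by linarith
    have hnum : 0 ≤ a^2*(1-a) := mul_nonneg (sq_nonneg a) (by linarith)
    have hb : 0 < b := lt_of_le_of_lt (div_nonneg hnum h2a.le) hbgt
    have hD : 0 < b*(2-3*a) - a^2*(1-a) := by
      have := (div_lt_iff₀ h2a).mp hbgt
      linarith
    have hba : 0 < b*(1-a) := mul_pos hb (by linarith)
    refine Matrix.PosDef.of_dotProduct_mulVec_pos (Mmat_herm a b s y z) ?_
    intro x hx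
    set u := x 0; set v := x 1; set w := x 2
    have hx' : ¬(u = 0 ∧ v = 0 ∧ w = 0) := by
      rintro ⟨h1, h2, h3⟩
      apply hx
      funext i
      fin_cases i <;> assumption
    have key : b*(1-a) * (b * (y*u)^2 - 2*b*(y*u)*(z*v) + (1-a+b) * (z*v)^2
        + 2*(a - b*s)*(y*u)*(y*w) + 2*b*s*(z*v)*(y*w)
        + (2 - a*(1+2*s) + b*s^2) * (y*w)^2)
      = (1-a)*(b*(y*u) - b*(z*v) + (a - b*s)*(y*w))^2 + b*((1-a)*(z*v) + a*(y*w))^2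
        + (b*(2-3*a) - a^2*(1-a))*(y*w)^2 := by ring
    have hP : 0 < b * (y*u)^2 - 2*b*(y*u)*(z*v) + (1-a+b) * (z*v)^2
        + 2*(a - b*s)*(y*u)*(y*w) + 2*b*s*(z*v)*(y*w)
        + (2 - a*(1+2*s) + b*s^2) * (y*w)^2 := by
      by_cases hw : w = 0
      · by_cases hv : v = 0
        · have hu : u ≠ 0 := by tauto
          have h5 : y*u ≠ 0 := mul_ne_zero hy.ne' hu
          have h6 : 0 < (y*u)^2 := lt_of_le_of_ne (sq_nonneg _) (Ne.symm (pow_ne_zero 2 h5))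
          rw [hw, hv]
          nlinarith [mul_pos hb h6]
        · have h5 : z*v ≠ 0 := mul_ne_zero hz.ne' hv
          have h6 : 0 < ((1-a)*(z*v))^2 := by
            have : (1-a)*(z*v) ≠ 0 := mul_ne_zero (by linarith) h5
            exact lt_of_le_of_ne (sq_nonneg _) (Ne.symm (pow_ne_zero 2 this))
          rw [hw]
          nlinarith [key, mul_pos hb h6, sq_nonneg (b*(y*u) - b*(z*v) + (a - b*s)*(y*0)),
            hba, mul_nonneg hD.le (sq_nonneg (y*(0:ℝ)))]
      · have h5 : y*w ≠ 0 := mul_ne_zero hy.ne' hw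
        have h6 : 0 < (y*w)^2 := lt_of_le_of_ne (sq_nonneg _) (Ne.symm (pow_ne_zero 2 h5))
        nlinarith [key, mul_pos hD h6, hba,
          mul_nonneg (by linarith : (0:ℝ) ≤ 1-a) (sq_nonneg (b*(y*u) - b*(z*v) + (a - b*s)*(y*w))),
          mul_nonneg hb.le (sq_nonneg ((1-a)*(z*v) + a*(y*w)))]
    have h7 : 0 < y^2 * z^2 * (x ⬝ᵥ (Mmat a b s y z) *ᵥ x) := by
      rw [Mmat_quad a b s y z hy.ne' hz.ne' x]; exact hP
    have hQ : 0 < x ⬝ᵥ (Mmat a b s y z) *ᵥ x :=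
      pos_of_mul_pos_right h7 (mul_pos hy2 hz2).le
    simpa using hQ

/-- The Hessian matrix of a function on ℝⁿ. -/
noncomputable def hessian {n : ℕ} (F : (Fin n → ℝ) → ℝ) (x : Fin n → ℝ) :
    Matrix (Fin n) (Fin n) ℝ :=
  fun i j => fderiv ℝ (fun y => fderiv ℝ F y (Pi.single j 1)) x (Pi.single i 1)

lemma hessian_apply {n : ℕ} (F : (Fin n → ℝ) → ℝ) (x : Fin n → ℝ) (i j : Fin n) :
    hessian F x i j = fderiv ℝ (fun y => fderiv ℝ F y (Pi.single j 1)) x (Pi.single i 1) := rfl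

set_option maxHeartbeats 1000000 in
/-- positive definiteness criterion for the Hessian of the rotationally
reduced potential on the interior of the exponential cone. -/
theorem hessian_posdef_iff_exp_cone_ansatz (φ : ℝ → ℝ) (hφ : ContDiffOn ℝ 2 φ (Set.Ioi 0))
    (F : (Fin 3 → ℝ) → ℝ)
    (hF : ∀ v : Fin 3 → ℝ,
      F v = -Real.log (v 1) - 2 * Real.log (v 2) + φ (Real.log (v 1 / v 2) - v 0 / v 2)) :
    ∀ v : Fin 3 → ℝ, 0 < v 2 → v 2 * Real.exp (v 0 / v 2) < v 1 →
      ((hessian F v).PosDef ↔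
        (deriv φ (Real.log (v 1 / v 2) - v 0 / v 2) < 2/3 ∧
         deriv (deriv φ) (Real.log (v 1 / v 2) - v 0 / v 2) >
           (deriv φ (Real.log (v 1 / v 2) - v 0 / v 2))^2
             * (1 - deriv φ (Real.log (v 1 / v 2) - v 0 / v 2))
             / (2 - 3 * deriv φ (Real.log (v 1 / v 2) - v 0 / v 2)))) := by
  intro v hz hyz
  have hy : 0 < v 1 := lt_trans (mul_pos hz (exp_pos _)) hyz
  -- the set U
  set U : Set (Fin 3 → ℝ) := {w | 0 < w 2 ∧ w 2 * Real.exp (w 0 / w 2) < w 1} with hUdef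
  have hvU : v ∈ U := by exact ⟨hz, hyz⟩
  have hmem : ∀ w ∈ U, 0 < w 1 ∧ 0 < w 2 ∧ 0 < tt w := by
    rintro w ⟨h2, hlt⟩
    have h1 : 0 < w 1 := lt_trans (mul_pos h2 (exp_pos _)) hlt
    refine ⟨h1, h2, ?_⟩
    have hlog := Real.log_lt_log (mul_pos h2 (exp_pos _)) hlt
    rw [Real.log_mul h2.ne' (exp_pos _).ne', Real.log_exp] at hlog
    unfold tt
    rw [div_eq_mul_inv] at hlog
    linarith
  have hUopen : IsOpen U := by
    have hS : IsOpen {w : Fin 3 → ℝ | 0 < w 2} :=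
      isOpen_Ioi.preimage (continuous_apply 2)
    have hg : ContinuousOn (fun w : Fin 3 → ℝ => w 1 - w 2 * Real.exp (w 0 / w 2))
        {w : Fin 3 → ℝ | 0 < w 2} := by
      apply (continuous_apply 1).continuousOn.sub
      apply ((continuous_apply 2).continuousOn.mul _)
      exact Real.continuous_exp.comp_continuousOn
        (((continuous_apply 0).continuousOn).div ((continuous_apply 2).continuousOn)
          (fun x hx => ne_of_gt hx))
    have : U = {w : Fin 3 → ℝ | 0 < w 2} ∩
        ((fun w : Fin 3 → ℝ => w 1 - w 2 * Real.exp (w 0 / w 2)) ⁻¹' (Ioi 0)) := by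
      ext w
      simp only [hUdef, mem_setOf_eq, mem_inter_iff, mem_preimage, mem_Ioi]
      constructor
      · rintro ⟨h2, hlt⟩; exact ⟨h2, by linarith⟩
      · rintro ⟨h2, hlt⟩; exact ⟨h2, by linarith⟩
    rw [this]
    exact hg.isOpen_inter_preimage hS isOpen_Ioi
  obtain ⟨_, _, htv⟩ := hmem v hvU
  -- differentiability of φ and deriv φ
  have hφd : ∀ {r : ℝ}, 0 < r → HasDerivAt φ (deriv φ r) r := fun {r} hr =>
    ((hφ.differentiableOn (by norm_num)).differentiableAt (Ioi_mem_nhds hr)).hasDerivAt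
  have hφ2 : ContDiffOn ℝ 1 (deriv φ) (Ioi 0) :=
    hφ.deriv_of_isOpen isOpen_Ioi (by norm_num)
  have hd2 : HasDerivAt (deriv φ) (deriv (deriv φ) (tt v)) (tt v) :=
    ((hφ2.differentiableOn one_ne_zero).differentiableAt (Ioi_mem_nhds htv)).hasDerivAt
  -- first derivative of F on U
  have hFd : ∀ w ∈ U, HasFDerivAt F (L3 (G0 φ w) (G1 φ w) (G2 φ w)) w := by
    intro w hw
    obtain ⟨h1, h2, ht⟩ := hmem w hw
    have hFF := FF_hasFDerivAt φ w h1 h2 (hφd ht)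
    apply hFF.congr_of_eventuallyEq
    filter_upwards [hUopen.mem_nhds hw] with u hu
    obtain ⟨h1', h2', _⟩ := hmem u hu
    rw [hF u, Real.log_div h1'.ne' h2'.ne', div_eq_mul_inv]
    rfl
  -- gradient component functions
  have he0 : (fun w => fderiv ℝ F w (Pi.single 0 1)) =ᶠ[nhds v] G0 φ := by
    filter_upwards [hUopen.mem_nhds hvU] with w hw
    rw [(hFd w hw).fderiv, L3_single0]
  have he1 : (fun w => fderiv ℝ F w (Pi.single 1 1)) =ᶠ[nhds v] G1 φ := by
    filter_upwards [hUopen.mem_nhds hvU] with w hw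
    rw [(hFd w hw).fderiv, L3_single1]
  have he2 : (fun w => fderiv ℝ F w (Pi.single 2 1)) =ᶠ[nhds v] G2 φ := by
    filter_upwards [hUopen.mem_nhds hvU] with w hw
    rw [(hFd w hw).fderiv, L3_single2]
  have hG0' := G0_hasFDerivAt φ v hy hz hd2
  have hG1' := G1_hasFDerivAt φ v hy hz hd2
  have hG2' := G2_hasFDerivAt φ v hy hz hd2
  -- the Hessian matrix
  have g00 : hessian F v 0 0 = deriv (deriv φ) (tt v) / (v 2)^2 := by
    rw [hessian_apply, he0.fderiv_eq, hG0'.fderiv, L3_single0]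
  have g10 : hessian F v 1 0 = -(deriv (deriv φ) (tt v)) / (v 2 * v 1) := by
    rw [hessian_apply, he0.fderiv_eq, hG0'.fderiv, L3_single1]
  have g20 : hessian F v 2 0 =
      (deriv φ (tt v) - deriv (deriv φ) (tt v) * ((v 0 - v 2)/(v 2))) / (v 2)^2 := by
    rw [hessian_apply, he0.fderiv_eq, hG0'.fderiv, L3_single2]
  have g01 : hessian F v 0 1 = -(deriv (deriv φ) (tt v)) / (v 2 * v 1) := by
    rw [hessian_apply, he1.fderiv_eq, hG1'.fderiv, L3_single0]
  have g11 : hessian F v 1 1 =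
      (1 - deriv φ (tt v) + deriv (deriv φ) (tt v)) / (v 1)^2 := by
    rw [hessian_apply, he1.fderiv_eq, hG1'.fderiv, L3_single1]
  have g21 : hessian F v 2 1 =
      deriv (deriv φ) (tt v) * ((v 0 - v 2)/(v 2)) / (v 1 * v 2) := by
    rw [hessian_apply, he1.fderiv_eq, hG1'.fderiv, L3_single2]
  have g02 : hessian F v 0 2 =
      (deriv φ (tt v) - deriv (deriv φ) (tt v) * ((v 0 - v 2)/(v 2))) / (v 2)^2 := by
    rw [hessian_apply, he2.fderiv_eq, hG2'.fderiv, L3_single0]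
  have g12 : hessian F v 1 2 =
      deriv (deriv φ) (tt v) * ((v 0 - v 2)/(v 2)) / (v 1 * v 2) := by
    rw [hessian_apply, he2.fderiv_eq, hG2'.fderiv, L3_single1]
  have g22 : hessian F v 2 2 =
      (2 - deriv φ (tt v) * (1 + 2*((v 0 - v 2)/(v 2)))
        + deriv (deriv φ) (tt v) * ((v 0 - v 2)/(v 2))^2) / (v 2)^2 := by
    rw [hessian_apply, he2.fderiv_eq, hG2'.fderiv, L3_single2]
  have hkey : hessian F v = Mmat (deriv φ (tt v)) (deriv (deriv φ) (tt v))
      ((v 0 - v 2)/(v 2)) (v 1) (v 2) := by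
    ext i j
    fin_cases i <;> fin_cases j
    · exact g00.trans (by simp [Mmat]; try ring)
    · exact g01.trans (by simp [Mmat]; try ring)
    · exact g02.trans (by simp [Mmat]; try ring)
    · exact g10.trans (by simp [Mmat]; try ring)
    · exact g11.trans (by simp [Mmat]; try ring)
    · exact g12.trans (by simp [Mmat]; try ring)
    · exact g20.trans (by simp [Mmat]; try ring)
    · exact g21.trans (by simp [Mmat]; try ring)
    · exact g22.trans (by simp [Mmat]; try ring)
  have harg : Real.log (v 1 / v 2) - v 0 / v 2 = tt v := by
    rw [Real.log_div hy.ne' hz.ne', div_eq_mul_inv]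
    rfl
  rw [hkey, harg, posdef_iff _ _ _ _ _ hy hz]
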